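/- arXiv:2203.10695 — 2 statements merged into one kernel-verified Lean document; each statement's English description precedes it below -/
import Mathlib

section
/- Let Φ be an irreducible, positive, trace preserving linear map on M_n(ℂ), let Q ∈ M_n(ℂ) be an orthogonal projection with Q ≠ 0 and Q ≠ I_n, and define ℚ(X) = QXQ on M_n(ℂ). Then 1 is not an eigenvalue of the linear map ℚ∘Φ on M_n(ℂ); equivalently, the map I − ℚ∘Φ is invertible. -/
open Matrix ComplexOrder

variable {n : ℕ} {Z : Matrix (Fin n) (Fin n) ℂ}

/-- Functional calculus gadget for Hermitian matrices. -/
noncomputable def gad (hZ : Z.IsHermitian) (f : ℝ → ℝ) : Matrix (Fin n) (Fin n) ℂ :=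
  (hZ.eigenvectorUnitary : Matrix (Fin n) (Fin n) ℂ) *
    Matrix.diagonal (fun i => (f (hZ.eigenvalues i) : ℂ)) *
    star (hZ.eigenvectorUnitary : Matrix (Fin n) (Fin n) ℂ)

lemma gad_mul (hZ : Z.IsHermitian) (f g : ℝ → ℝ) :
    gad hZ f * gad hZ g = gad hZ (fun t => f t * g t) := by
  have hU : star (hZ.eigenvectorUnitary : Matrix (Fin n) (Fin n) ℂ) *
      (hZ.eigenvectorUnitary : Matrix (Fin n) (Fin n) ℂ) = 1 :=
    Matrix.mem_unitaryGroup_iff'.mp hZ.eigenvectorUnitary.2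
  simp only [gad, Matrix.mul_assoc]
  rw [← Matrix.mul_assoc (star _) _, hU, Matrix.one_mul,
    ← Matrix.mul_assoc (Matrix.diagonal _) (Matrix.diagonal _), Matrix.diagonal_mul_diagonal]
  push_cast
  rfl

lemma gad_isHermitian (hZ : Z.IsHermitian) (f : ℝ → ℝ) : (gad hZ f).IsHermitian := by
  have hD : (Matrix.diagonal (fun i => (f (hZ.eigenvalues i) : ℂ)))ᴴ =
      Matrix.diagonal (fun i => (f (hZ.eigenvalues i) : ℂ)) := by
    ext i j
    rcases eq_or_ne i j with rfl | h
    · simp [Matrix.diagonal_apply_eq, Complex.conj_ofReal]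
    · simp [Matrix.diagonal_apply_ne, h, Ne.symm h]
  unfold gad Matrix.IsHermitian
  simp only [Matrix.star_eq_conjTranspose, Matrix.conjTranspose_mul,
    Matrix.conjTranspose_conjTranspose, hD, Matrix.mul_assoc]

lemma gad_posSemidef (hZ : Z.IsHermitian) (f : ℝ → ℝ)
    (h : ∀ i, 0 ≤ f (hZ.eigenvalues i)) : (gad hZ f).PosSemidef := by
  have : (Matrix.diagonal (fun i => (f (hZ.eigenvalues i) : ℂ))).PosSemidef := by
    refine Matrix.posSemidef_diagonal_iff.mpr fun i => ?_
    exact_mod_cast h i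
  simpa [gad, Matrix.star_eq_conjTranspose] using
    this.mul_mul_conjTranspose_same (hZ.eigenvectorUnitary : Matrix (Fin n) (Fin n) ℂ)

lemma gad_add (hZ : Z.IsHermitian) (f g : ℝ → ℝ) :
    gad hZ (fun t => f t + g t) = gad hZ f + gad hZ g := by
  simp only [gad]
  push_cast
  rw [← Matrix.diagonal_add, Matrix.mul_add, Matrix.add_mul]

lemma gad_sub (hZ : Z.IsHermitian) (f g : ℝ → ℝ) :
    gad hZ (fun t => f t - g t) = gad hZ f - gad hZ g := by
  simp only [gad]
  push_cast
  rw [← Matrix.diagonal_sub, Matrix.mul_sub, Matrix.sub_mul]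

lemma gad_smul (hZ : Z.IsHermitian) (c : ℝ) (f : ℝ → ℝ) :
    gad hZ (fun t => c * f t) = (c : ℂ) • gad hZ f := by
  simp only [gad]
  push_cast
  rw [show (fun i => (c:ℂ) * (f (hZ.eigenvalues i):ℂ)) = (c:ℂ) • (fun i => (f (hZ.eigenvalues i):ℂ)) from rfl,
    Matrix.diagonal_smul, Matrix.mul_smul, Matrix.smul_mul]

lemma gad_id (hZ : Z.IsHermitian) : gad hZ (fun t => t) = Z := by
  rw [gad]; exact hZ.spectral_theorem.symm

lemma gad_one (hZ : Z.IsHermitian) : gad hZ (fun _ => 1) = 1 := by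
  have hU : (hZ.eigenvectorUnitary : Matrix (Fin n) (Fin n) ℂ) *
      star (hZ.eigenvectorUnitary : Matrix (Fin n) (Fin n) ℂ) = 1 :=
    Matrix.mem_unitaryGroup_iff.mp hZ.eigenvectorUnitary.2
  simp only [gad, Complex.ofReal_one, Matrix.diagonal_one, Matrix.mul_one]
  exact hU

lemma psd_exists_sq {A : Matrix (Fin n) (Fin n) ℂ} (hA : A.PosSemidef) :
    ∃ B : Matrix (Fin n) (Fin n) ℂ, A = Bᴴ * B := by
  refine ⟨gad hA.1 Real.sqrt, ?_⟩
  rw [(gad_isHermitian hA.1 Real.sqrt).eq, gad_mul]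
  conv_lhs => rw [← gad_id hA.1]
  unfold gad
  congr 1
  congr 1
  exact congrArg Matrix.diagonal (funext fun i => by
    simp only [Real.mul_self_sqrt (hA.eigenvalues_nonneg i)])

lemma psd_diag_nonneg {A : Matrix (Fin n) (Fin n) ℂ} (hA : A.PosSemidef) (i : Fin n) :
    0 ≤ A i i := by
  obtain ⟨B, rfl⟩ := psd_exists_sq hA
  rw [Matrix.mul_apply]
  exact Finset.sum_nonneg fun k _ => by
    simpa [Matrix.conjTranspose_apply] using star_mul_self_nonneg (B k i)

lemma psd_trace_nonneg {A : Matrix (Fin n) (Fin n) ℂ} (hA : A.PosSemidef) :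
    0 ≤ A.trace := by
  exact Finset.sum_nonneg fun i _ => psd_diag_nonneg hA i

lemma psd_trace_zero {A : Matrix (Fin n) (Fin n) ℂ} (hA : A.PosSemidef)
    (h : A.trace = 0) : A = 0 := by
  obtain ⟨B, rfl⟩ := psd_exists_sq hA
  have hdiag : ∀ i, (Bᴴ * B) i i = 0 := by
    intro i
    have := (Finset.sum_eq_zero_iff_of_nonneg
      (fun i _ => psd_diag_nonneg (Matrix.posSemidef_conjTranspose_mul_self B) i)).mp h
    exact this i (Finset.mem_univ i)
  have hB : B = 0 := by
    ext k i
    have h1 : dotProduct (star (fun k => B k i)) (fun k => B k i) = 0 := by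
      rw [← hdiag i, Matrix.mul_apply]
      simp [Matrix.conjTranspose_apply, dotProduct]
    have := dotProduct_star_self_eq_zero.mp h1
    exact congrFun this k
  simp [hB]

lemma psd_corner {A P : Matrix (Fin n) (Fin n) ℂ} (hA : A.PosSemidef)
    (hP : P.IsHermitian) (h : (1 - P) * A * (1 - P) = 0) : A = P * A * P := by
  obtain ⟨B, rfl⟩ := psd_exists_sq hA
  have hE : (1 - P)ᴴ = 1 - P := by
    rw [Matrix.conjTranspose_sub, Matrix.conjTranspose_one, hP]
  have h2 : (B * (1 - P))ᴴ * (B * (1 - P)) = 0 := by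
    rw [Matrix.conjTranspose_mul, hE]
    calc (1 - P) * Bᴴ * (B * (1 - P)) = (1 - P) * (Bᴴ * B) * (1 - P) := by
          rw [Matrix.mul_assoc, Matrix.mul_assoc, Matrix.mul_assoc]
      _ = 0 := h
  have hBE : B * (1 - P) = 0 := Matrix.conjTranspose_mul_self_eq_zero.mp h2
  have hBP : B = B * P := by
    have := hBE
    rw [Matrix.mul_sub, Matrix.mul_one, sub_eq_zero] at this
    exact this
  calc Bᴴ * B = (B * P)ᴴ * (B * P) := by rw [← hBP]
    _ = P * (Bᴴ * B) * P := by
        rw [Matrix.conjTranspose_mul, hP]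
        simp [Matrix.mul_assoc]

lemma psd_corner_of_trace {A P : Matrix (Fin n) (Fin n) ℂ} (hA : A.PosSemidef)
    (hP : P.IsHermitian) (hidem : P * P = P) (htr : A.trace = (P * A * P).trace) :
    A = P * A * P := by
  have hE : (1 - P)ᴴ = 1 - P := by
    rw [Matrix.conjTranspose_sub, Matrix.conjTranspose_one, hP]
  have hC : ((1 - P) * A * (1 - P)).PosSemidef := by
    have := hA.conjTranspose_mul_mul_same (1 - P)
    rwa [hE] at this
  have htrPAP : (P * A * P).trace = (A * P).trace := by
    rw [Matrix.trace_mul_cycle, hidem, Matrix.trace_mul_comm]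

  have htrC : ((1 - P) * A * (1 - P)).trace = 0 := by
    have expand : (1 - P) * A * (1 - P) = A - P * A - A * P + P * A * P := by
        noncomm_ring
    rw [expand]
    simp only [Matrix.trace_add, Matrix.trace_sub]
    have h1 : (P * A).trace = (A * P).trace := Matrix.trace_mul_comm P A
    rw [h1, htrPAP]
    rw [htrPAP] at htr
    rw [← htr]
    ring
  have := psd_trace_zero hC htrC
  exact psd_corner hA hP this

lemma gad_congr (hZ : Z.IsHermitian) {f g : ℝ → ℝ}
    (h : ∀ i, f (hZ.eigenvalues i) = g (hZ.eigenvalues i)) : gad hZ f = gad hZ g := by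
  unfold gad
  congr 1
  congr 1
  exact congrArg Matrix.diagonal (funext fun i => by rw [h i])

lemma gad_zero (hZ : Z.IsHermitian) : gad hZ (fun _ => 0) = 0 := by
  simp [gad]

lemma trace_corner_diff (A P : Matrix (Fin n) (Fin n) ℂ) (hidem : P * P = P) :
    ((1 - P) * A * (1 - P)).trace = A.trace - (P * A * P).trace := by
  have expand : (1 - P) * A * (1 - P) = A - P * A - A * P + P * A * P := by noncomm_ring
  rw [expand]
  simp only [Matrix.trace_add, Matrix.trace_sub]
  have h1 : (P * A).trace = (A * P).trace := Matrix.trace_mul_comm P A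
  have h2 : (P * A * P).trace = (A * P).trace := by
    rw [Matrix.trace_mul_cycle, hidem, Matrix.trace_mul_comm]
  rw [h1, h2]; ring

lemma herm_one_sub {P : Matrix (Fin n) (Fin n) ℂ} (hP : P.IsHermitian) :
    (1 - P).IsHermitian := by
  unfold Matrix.IsHermitian
  rw [Matrix.conjTranspose_sub, Matrix.conjTranspose_one, hP]

lemma psd_conj_herm {A P : Matrix (Fin n) (Fin n) ℂ} (hA : A.PosSemidef)
    (hP : P.IsHermitian) : (P * A * P).PosSemidef := by
  have := hA.conjTranspose_mul_mul_same P
  rwa [hP] at this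

lemma psd_fixed_support {n : ℕ} (Φ : Matrix (Fin n) (Fin n) ℂ →ₗ[ℂ] Matrix (Fin n) (Fin n) ℂ)
    (hΦpos : ∀ X : Matrix (Fin n) (Fin n) ℂ, X.PosSemidef → (Φ X).PosSemidef)
    {A : Matrix (Fin n) (Fin n) ℂ} (hApsd : A.PosSemidef) (hA0 : A ≠ 0) (hΦA : Φ A = A) :
    ∃ R : Matrix (Fin n) (Fin n) ℂ, R.IsHermitian ∧ R * R = R ∧ R * A = A ∧
      (∃ Ainv, A * Ainv = R) ∧ (∀ X, Φ (R * X * R) = R * Φ (R * X * R) * R) := by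
  classical
  have hA' : A.IsHermitian := hApsd.1
  have hd : ∀ i, 0 ≤ hA'.eigenvalues i := hApsd.eigenvalues_nonneg
  set R : Matrix (Fin n) (Fin n) ℂ := gad hA' (fun u => if u = 0 then 0 else 1) with hR_def
  have hRh : R.IsHermitian := gad_isHermitian hA' _
  have hRidem : R * R = R := by
    rw [hR_def, gad_mul]
    exact gad_congr hA' fun i => by by_cases h : hA'.eigenvalues i = 0 <;> simp [h]
  have hRA : R * A = A := by
    have h := gad_mul hA' (fun u => if u = 0 then 0 else 1) (fun u => u)
    rw [gad_id hA'] at h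
    have h2 : gad hA' (fun u => (if u = 0 then (0:ℝ) else 1) * u) = gad hA' (fun u => u) :=
      gad_congr hA' fun i => by by_cases hh : hA'.eigenvalues i = 0 <;> simp [hh]
    rw [h2, gad_id] at h
    rw [hR_def, h]
  have hAinv : ∃ Ainv, A * Ainv = R := by
    refine ⟨gad hA' (fun u => if u = 0 then 0 else u⁻¹), ?_⟩
    have h := gad_mul hA' (fun u => u) (fun u => if u = 0 then 0 else u⁻¹)
    rw [gad_id hA'] at h
    have h2 : gad hA' (fun u => u * (if u = 0 then (0:ℝ) else u⁻¹)) =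
        gad hA' (fun u => if u = 0 then 0 else 1) :=
      gad_congr hA' fun i => by
        by_cases hh : hA'.eigenvalues i = 0 <;> simp [hh, mul_inv_cancel₀]
    rw [h2] at h
    rw [h, hR_def]
  have hSex : ∃ i, hA'.eigenvalues i ≠ 0 := by
    by_contra h
    push_neg at h
    apply hA0
    have h2 : gad hA' (fun u => u) = gad hA' (fun _ => 0) := gad_congr hA' fun i => h i
    rw [gad_id, gad_zero] at h2
    exact h2
  set S := Finset.univ.filter (fun i => hA'.eigenvalues i ≠ 0) with hS_def
  have hSne : S.Nonempty := by
    obtain ⟨i, hi⟩ := hSex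
    exact ⟨i, by simp [hS_def, hi]⟩
  set lam := S.inf' hSne hA'.eigenvalues with hlam_def
  have hlam : 0 < lam := by
    rw [hlam_def, Finset.lt_inf'_iff]
    intro i hi
    have : hA'.eigenvalues i ≠ 0 := by simpa [hS_def] using hi
    exact (hd i).lt_of_ne (Ne.symm this)
  have hc : 0 < lam⁻¹ := inv_pos.mpr hlam
  have hpoint : ∀ i, 0 ≤ lam⁻¹ * hA'.eigenvalues i -
      (if hA'.eigenvalues i = 0 then (0:ℝ) else 1) := by
    intro i
    by_cases h : hA'.eigenvalues i = 0
    · simp [h]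
    · have hle : lam ≤ hA'.eigenvalues i := Finset.inf'_le _ (by simp [hS_def, h])
      have h1 : 1 ≤ lam⁻¹ * hA'.eigenvalues i := by
        rw [← inv_mul_cancel₀ hlam.ne']
        exact mul_le_mul_of_nonneg_left hle (le_of_lt hc)
      simp only [if_neg h]
      linarith
  have hgadsmul : gad hA' (fun u => lam⁻¹ * u) = ((lam⁻¹ : ℝ) : ℂ) • A := by
    have h := gad_smul hA' lam⁻¹ (fun u => u)
    rw [gad_id] at h
    exact h
  have hcAR : ((lam⁻¹ : ℝ) : ℂ) • A - R =
      gad hA' (fun u => lam⁻¹ * u - (if u = 0 then 0 else 1)) := by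
    rw [gad_sub, hgadsmul, hR_def]
  -- block invariance
  have hblock : ∀ B : Matrix (Fin n) (Fin n) ℂ, B.PosSemidef → R * B * R = B →
      Φ B = R * Φ B * R := by
    intro B hB hRBR
    set t : ℝ := ∑ i, max (hB.1.eigenvalues i) 0 with ht_def
    have ht : 0 ≤ t := Finset.sum_nonneg fun i _ => le_max_right _ _
    have hone : (t : ℂ) • (1 : Matrix (Fin n) (Fin n) ℂ) = gad hB.1 (fun _ => t) := by
      have h := gad_smul hB.1 t (fun _ => 1)
      rw [gad_one] at h
      simp only [mul_one] at h
      exact h.symm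
    have htB : ((t:ℂ) • 1 - B).PosSemidef := by
      have e2 := (gad_sub hB.1 (fun _ => t) (fun s => s)).symm
      rw [gad_id hB.1, ← hone] at e2
      rw [e2]
      refine gad_posSemidef hB.1 _ fun i => ?_
      have h1 : hB.1.eigenvalues i ≤ t := by
        calc hB.1.eigenvalues i ≤ max (hB.1.eigenvalues i) 0 := le_max_left _ _
          _ ≤ t := Finset.single_le_sum (fun j _ => le_max_right (hB.1.eigenvalues j) 0)
              (Finset.mem_univ i)
      linarith
    have htR : ((t:ℂ) • R - B).PosSemidef := by
      have e3 : R * ((t:ℂ) • 1 - B) * R = (t:ℂ) • R - B := by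
        rw [Matrix.mul_sub, Matrix.mul_smul, Matrix.mul_one, Matrix.sub_mul, Matrix.smul_mul,
          hRidem, hRBR]
      have := psd_conj_herm htB hRh
      rwa [e3] at this
    have hsA : (((t * lam⁻¹ : ℝ)):ℂ) • A - B |>.PosSemidef := by
      have e4 : gad hA' (fun u => t * (lam⁻¹ * u - (if u = 0 then 0 else 1))) =
          (t:ℂ) • (((lam⁻¹ : ℝ) : ℂ) • A - R) := by
        rw [gad_smul, ← hcAR]
      have key : ((t * lam⁻¹ : ℝ):ℂ) • A - B =
          gad hA' (fun u => t * (lam⁻¹ * u - (if u = 0 then 0 else 1))) + ((t:ℂ) • R - B) := by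
        rw [e4, smul_sub, smul_smul]
        push_cast
        abel
      rw [key]
      refine Matrix.PosSemidef.add ?_ htR
      exact gad_posSemidef hA' _ fun i => mul_nonneg ht (hpoint i)
    have hΦB := hΦpos B hB
    have hmono : (((t * lam⁻¹ : ℝ):ℂ) • A - Φ B).PosSemidef := by
      have := hΦpos _ hsA
      rwa [map_sub, Φ.map_smul, hΦA] at this
    have h1R : (1 - R) * A = 0 := by
      rw [Matrix.sub_mul, Matrix.one_mul, hRA, sub_self]
    have hcorn : ((1 - R) * Φ B * (1 - R)).PosSemidef :=
      psd_conj_herm hΦB (herm_one_sub hRh)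
    have hcornneg : (-((1 - R) * Φ B * (1 - R))).PosSemidef := by
      have hps := psd_conj_herm hmono (herm_one_sub hRh)
      have e6 : (1 - R) * ((((t * lam⁻¹ : ℝ)):ℂ) • A - Φ B) = -((1 - R) * Φ B) := by
        rw [Matrix.mul_sub, Matrix.mul_smul, h1R, smul_zero, zero_sub]
      rw [e6, Matrix.neg_mul] at hps
      exact hps
    have hzero : (1 - R) * Φ B * (1 - R) = 0 := by
      refine psd_trace_zero hcorn (le_antisymm ?_ (psd_trace_nonneg hcorn))
      have := psd_trace_nonneg hcornneg
      rwa [Matrix.trace_neg, neg_nonneg] at this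
    exact psd_corner hΦB hRh hzero
  -- hermitian invariance
  have hherm : ∀ Z : Matrix (Fin n) (Fin n) ℂ, ∀ hZ : Z.IsHermitian,
      R * Z = Z → Z * R = Z → Φ Z = R * Φ Z * R := by
    intro Z hZ hRZ hZR
    have e0p : gad hZ (fun s => s) * gad hZ (fun u => if 0 < u then 1 else 0) =
        gad hZ (fun u => max u 0) := by
      rw [gad_mul]
      refine gad_congr hZ fun i => ?_
      by_cases h : 0 < hZ.eigenvalues i
      · simp [h, max_eq_left (le_of_lt h)]
      · simp [h, max_eq_right (le_of_not_gt h)]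
    have e0p' : gad hZ (fun u => if 0 < u then 1 else 0) * gad hZ (fun s => s) =
        gad hZ (fun u => max u 0) := by
      rw [gad_mul]
      refine gad_congr hZ fun i => ?_
      by_cases h : 0 < hZ.eigenvalues i
      · simp [h, max_eq_left (le_of_lt h)]
      · simp [h, max_eq_right (le_of_not_gt h)]
    have e0m : gad hZ (fun s => s) * gad hZ (fun u => if u < 0 then -1 else 0) =
        gad hZ (fun u => max (-u) 0) := by
      rw [gad_mul]
      refine gad_congr hZ fun i => ?_
      by_cases h : hZ.eigenvalues i < 0
      · rw [if_pos h, max_eq_left (by linarith)]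
        ring
      · rw [if_neg h, max_eq_right (by push_neg at h; linarith)]
        ring
    have e0m' : gad hZ (fun u => if u < 0 then -1 else 0) * gad hZ (fun s => s) =
        gad hZ (fun u => max (-u) 0) := by
      rw [gad_mul]
      refine gad_congr hZ fun i => ?_
      by_cases h : hZ.eigenvalues i < 0
      · rw [if_pos h, max_eq_left (by linarith)]
        ring
      · rw [if_neg h, max_eq_right (by push_neg at h; linarith)]
        ring
    rw [gad_id hZ] at e0p e0p' e0m e0m'
    have hsuppP : R * gad hZ (fun u => max u 0) * R = gad hZ (fun u => max u 0) := by
      rw [← e0p, ← Matrix.mul_assoc, hRZ, e0p, ← e0p', Matrix.mul_assoc, hZR, e0p']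
    have hsuppM : R * gad hZ (fun u => max (-u) 0) * R = gad hZ (fun u => max (-u) 0) := by
      rw [← e0m, ← Matrix.mul_assoc, hRZ, e0m, ← e0m', Matrix.mul_assoc, hZR, e0m']
    have hp := hblock _ (gad_posSemidef hZ _ fun i => le_max_right _ _) hsuppP
    have hm := hblock _ (gad_posSemidef hZ _ fun i => le_max_right _ _) hsuppM
    have hdec : Z = gad hZ (fun u => max u 0) - gad hZ (fun u => max (-u) 0) := by
      rw [← gad_sub]
      have hfun : (fun u : ℝ => max u 0 - max (-u) 0) = fun u : ℝ => u := by
        funext u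
        rcases le_total u 0 with h | h
        · rw [max_eq_right h, max_eq_left (by linarith)]; ring
        · rw [max_eq_left h, max_eq_right (by linarith)]; ring
      rw [hfun, gad_id]
    have hsplit : Φ Z = Φ (gad hZ (fun u => max u 0)) - Φ (gad hZ (fun u => max (-u) 0)) := by
      conv_lhs => rw [hdec]
      rw [map_sub]
    rw [hsplit, Matrix.mul_sub, Matrix.sub_mul, ← hp, ← hm]
  refine ⟨R, hRh, hRidem, hRA, hAinv, ?_⟩
  intro X
  set Y := R * X * R with hY_def
  have hRY : R * Y = Y := by
    rw [hY_def, ← Matrix.mul_assoc, ← Matrix.mul_assoc, hRidem]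
  have hYR : Y * R = Y := by
    rw [hY_def, Matrix.mul_assoc, Matrix.mul_assoc, hRidem, ← Matrix.mul_assoc]
  have hRYc : R * Yᴴ = Yᴴ := by
    have := congrArg Matrix.conjTranspose hYR
    rwa [Matrix.conjTranspose_mul, hRh] at this
  have hYcR : Yᴴ * R = Yᴴ := by
    have := congrArg Matrix.conjTranspose hRY
    rwa [Matrix.conjTranspose_mul, hRh] at this
  set Y₁ : Matrix (Fin n) (Fin n) ℂ := (2⁻¹ : ℂ) • (Y + Yᴴ) with hY₁
  set Y₂ : Matrix (Fin n) (Fin n) ℂ := (-(Complex.I)/2) • (Y - Yᴴ) with hY₂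
  have hY₁herm : Y₁.IsHermitian := by
    rw [Matrix.IsHermitian, hY₁, Matrix.conjTranspose_smul, Matrix.conjTranspose_add,
      Matrix.conjTranspose_conjTranspose]
    rw [show star ((2:ℂ)⁻¹) = 2⁻¹ by simp]
    rw [add_comm]
  have hY₂herm : Y₂.IsHermitian := by
    rw [Matrix.IsHermitian, hY₂, Matrix.conjTranspose_smul, Matrix.conjTranspose_sub,
      Matrix.conjTranspose_conjTranspose]
    rw [show star (-(Complex.I)/2) = Complex.I/2 by simp]
    rw [show Yᴴ - Y = -(Y - Yᴴ) by abel]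
    rw [smul_neg, ← neg_smul]
    congr 1
    ring
  have hRY₁ : R * Y₁ = Y₁ := by
    rw [hY₁, Matrix.mul_smul, Matrix.mul_add, hRY, hRYc]
  have hY₁R : Y₁ * R = Y₁ := by
    rw [hY₁, Matrix.smul_mul, Matrix.add_mul, hYR, hYcR]
  have hRY₂ : R * Y₂ = Y₂ := by
    rw [hY₂, Matrix.mul_smul, Matrix.mul_sub, hRY, hRYc]
  have hY₂R : Y₂ * R = Y₂ := by
    rw [hY₂, Matrix.smul_mul, Matrix.sub_mul, hYR, hYcR]
  have h1 := hherm Y₁ hY₁herm hRY₁ hY₁R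
  have h2 := hherm Y₂ hY₂herm hRY₂ hY₂R
  have hYsum : Y = Y₁ + Complex.I • Y₂ := by
    rw [hY₁, hY₂, smul_smul]
    rw [show Complex.I * (-(Complex.I)/2) = 2⁻¹ by field_simp; simp [Complex.I_sq]]
    rw [← smul_add]
    rw [show Y + Yᴴ + (Y - Yᴴ) = (2:ℂ) • Y by rw [two_smul]; abel]
    rw [smul_smul]
    norm_num
  have hsplit : Φ Y = Φ Y₁ + Complex.I • Φ Y₂ := by
    conv_lhs => rw [hYsum]
    simp only [map_add, _root_.map_smul]
  show Φ Y = R * Φ Y * R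
  rw [hsplit, Matrix.mul_add, Matrix.add_mul, Matrix.mul_smul, Matrix.smul_mul, ← h1, ← h2]

lemma herm_parts {n : ℕ} (M : Matrix (Fin n) (Fin n) ℂ) :
    ((2⁻¹:ℂ) • (M + Mᴴ)).IsHermitian ∧ ((-(Complex.I)/2) • (M - Mᴴ)).IsHermitian ∧
    M = (2⁻¹:ℂ) • (M + Mᴴ) + Complex.I • ((-(Complex.I)/2) • (M - Mᴴ)) ∧
    Mᴴ = (2⁻¹:ℂ) • (M + Mᴴ) - Complex.I • ((-(Complex.I)/2) • (M - Mᴴ)) := by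
  refine ⟨?_, ?_, ?_, ?_⟩
  · rw [Matrix.IsHermitian, Matrix.conjTranspose_smul, Matrix.conjTranspose_add,
      Matrix.conjTranspose_conjTranspose, show star ((2:ℂ)⁻¹) = 2⁻¹ by simp, add_comm]
  · rw [Matrix.IsHermitian, Matrix.conjTranspose_smul, Matrix.conjTranspose_sub,
      Matrix.conjTranspose_conjTranspose, show star (-(Complex.I)/2) = Complex.I/2 by simp,
      show Mᴴ - M = -(M - Mᴴ) by abel, smul_neg, ← neg_smul]
    congr 1
    ring
  · rw [smul_smul, show Complex.I * (-(Complex.I)/2) = 2⁻¹ by field_simp; simp [Complex.I_sq], ← smul_add,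
      show M + Mᴴ + (M - Mᴴ) = (2:ℂ) • M by rw [two_smul]; abel, smul_smul]
    norm_num
  · rw [smul_smul, show Complex.I * (-(Complex.I)/2) = 2⁻¹ by field_simp; simp [Complex.I_sq], ← smul_sub,
      show M + Mᴴ - (M - Mᴴ) = (2:ℂ) • Mᴴ by rw [two_smul]; abel, smul_smul]
    norm_num


/-- For an irreducible, positive, trace preserving map `Φ` on `M_n(ℂ)` and a
nontrivial orthogonal projection `Q`, with `ℚ(X) = QXQ`, `1` is not an eigenvalue of `ℚ∘Φ`;
equivalently, `I − ℚ∘Φ` is invertible. -/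
theorem one_not_eigenvalue_QPhi {n : ℕ}
    (Φ QQ : Matrix (Fin n) (Fin n) ℂ →ₗ[ℂ] Matrix (Fin n) (Fin n) ℂ)
    (Q : Matrix (Fin n) (Fin n) ℂ)
    (hΦpos : ∀ X : Matrix (Fin n) (Fin n) ℂ, X.PosSemidef → (Φ X).PosSemidef)
    (hΦtr : ∀ X : Matrix (Fin n) (Fin n) ℂ, (Φ X).trace = X.trace)
    (hΦirr : ∀ p : Matrix (Fin n) (Fin n) ℂ, p.IsHermitian → p * p = p →
      (∀ X : Matrix (Fin n) (Fin n) ℂ, Φ (p * X * p) = p * Φ (p * X * p) * p) → p = 0 ∨ p = 1)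
    (hQherm : Q.IsHermitian) (hQidem : Q * Q = Q) (hQne0 : Q ≠ 0) (hQne1 : Q ≠ 1)
    (hQQ : ∀ X : Matrix (Fin n) (Fin n) ℂ, QQ X = Q * X * Q) :
    (∀ X : Matrix (Fin n) (Fin n) ℂ, QQ (Φ X) = X → X = 0) ∧
      Function.Bijective ⇑(LinearMap.id - QQ ∘ₗ Φ :
        Matrix (Fin n) (Fin n) ℂ →ₗ[ℂ] Matrix (Fin n) (Fin n) ℂ) := by
  classical
  -- Φ maps Hermitian matrices to Hermitian matrices
  have hΦherm : ∀ Z : Matrix (Fin n) (Fin n) ℂ, Z.IsHermitian → (Φ Z).IsHermitian := by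
    intro Z hZ
    have hdec : Z = gad hZ (fun u => max u 0) - gad hZ (fun u => max (-u) 0) := by
      rw [← gad_sub]
      have hfun : (fun u : ℝ => max u 0 - max (-u) 0) = fun u : ℝ => u := by
        funext u
        rcases le_total u 0 with h | h
        · rw [max_eq_right h, max_eq_left (by linarith)]; ring
        · rw [max_eq_left h, max_eq_right (by linarith)]; ring
      rw [hfun, gad_id]
    have hp := hΦpos _ (gad_posSemidef hZ (fun u => max u 0) fun i => le_max_right _ _)
    have hm := hΦpos _ (gad_posSemidef hZ (fun u => max (-u) 0) fun i => le_max_right _ _)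
    have hsplit : Φ Z = Φ (gad hZ (fun u => max u 0)) - Φ (gad hZ (fun u => max (-u) 0)) := by
      conv_lhs => rw [hdec]
      rw [map_sub]
    rw [hsplit]
    exact hp.1.sub hm.1
  -- Φ is star preserving
  have hΦstar : ∀ M : Matrix (Fin n) (Fin n) ℂ, Φ Mᴴ = (Φ M)ᴴ := by
    intro M
    obtain ⟨hH, hK, hMsum, hMstar⟩ := herm_parts M
    set H := (2⁻¹ : ℂ) • (M + Mᴴ) with hH_def
    set K := (-(Complex.I)/2) • (M - Mᴴ) with hK_def
    have h1 : (Φ H).IsHermitian := hΦherm H hH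
    have h2 : (Φ K).IsHermitian := hΦherm K hK
    have e1 : Φ Mᴴ = Φ H - Complex.I • Φ K := by
      rw [hMstar]
      simp only [map_sub, _root_.map_smul]
    have e2 : Φ M = Φ H + Complex.I • Φ K := by
      conv_lhs => rw [hMsum]
      simp only [map_add, _root_.map_smul]
    rw [e1, e2, Matrix.conjTranspose_add, Matrix.conjTranspose_smul, h1, h2,
      show star Complex.I = -Complex.I by simp, neg_smul, ← sub_eq_add_neg]
  -- no nonzero PSD fixed point
  have psdfix : ∀ A : Matrix (Fin n) (Fin n) ℂ, A.PosSemidef → A ≠ 0 →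
      Q * Φ A * Q = A → False := by
    intro A hApsd hA0 hAfix
    have hQA : Q * A = A := by
      have h : Q * (Q * Φ A * Q) = Q * Φ A * Q := by
        rw [← Matrix.mul_assoc, ← Matrix.mul_assoc, hQidem]
      rw [hAfix] at h
      exact h
    have hΦA : Φ A = A := by
      have htr0 : (Φ A).trace = (Q * Φ A * Q).trace := by
        rw [hAfix]
        exact hΦtr A
      have h := psd_corner_of_trace (hΦpos _ hApsd) hQherm hQidem htr0
      rw [hAfix] at h
      exact h
    obtain ⟨R, hRh, hRidem, hRA, ⟨Ainv, hAinv⟩, hinv⟩ :=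
      psd_fixed_support Φ hΦpos hApsd hA0 hΦA
    rcases hΦirr R hRh hRidem hinv with h0 | h1
    · rw [h0, Matrix.zero_mul] at hRA
      exact hA0 hRA.symm
    · apply hQne1
      calc Q = Q * (A * Ainv) := by rw [hAinv, h1, Matrix.mul_one]
        _ = (Q * A) * Ainv := by rw [Matrix.mul_assoc]
        _ = A * Ainv := by rw [hQA]
        _ = 1 := by rw [hAinv, h1]
  -- positive part of a Hermitian fixed point is fixed
  have posfix : ∀ V : Matrix (Fin n) (Fin n) ℂ, ∀ hV : V.IsHermitian, Q * Φ V * Q = V →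
      Q * Φ (gad hV (fun u => max u 0)) * Q = gad hV (fun u => max u 0) := by
    intro V hV hVfix
    have hWp : (gad hV (fun u => max u 0)).PosSemidef :=
      gad_posSemidef hV _ fun i => le_max_right _ _
    have hWm : (gad hV (fun u => max (-u) 0)).PosSemidef :=
      gad_posSemidef hV _ fun i => le_max_right _ _
    set Wp := gad hV (fun u => max u 0) with hWp_def
    set Wm := gad hV (fun u => max (-u) 0) with hWm_def
    set P := gad hV (fun u => if 0 < u then 1 else 0) with hP_def
    have hPh : P.IsHermitian := gad_isHermitian hV _
    have hPidem : P * P = P := by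
      rw [hP_def, gad_mul]
      exact gad_congr hV fun i => by by_cases h : 0 < hV.eigenvalues i <;> simp [h]
    have hPWp : P * Wp = Wp := by
      rw [hP_def, hWp_def, gad_mul]
      exact gad_congr hV fun i => by
        by_cases h : 0 < hV.eigenvalues i
        · simp [h]
        · simp [h, max_eq_right (le_of_not_gt h)]
    have hWpP : Wp * P = Wp := by
      rw [hP_def, hWp_def, gad_mul]
      exact gad_congr hV fun i => by
        by_cases h : 0 < hV.eigenvalues i
        · simp [h]
        · simp [h, max_eq_right (le_of_not_gt h)]
    have hPWm : P * Wm = 0 := by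
      rw [hP_def, hWm_def, gad_mul]
      have h2 : gad hV (fun u => (if 0 < u then (1:ℝ) else 0) * max (-u) 0) =
          gad hV (fun _ => 0) :=
        gad_congr hV fun i => by
          by_cases h : 0 < hV.eigenvalues i
          · simp [h, max_eq_right (by linarith : -hV.eigenvalues i ≤ 0)]
          · simp [h]
      rw [h2, gad_zero]
    have hVdec : V = Wp - Wm := by
      rw [hWp_def, hWm_def, ← gad_sub]
      have hfun : (fun u : ℝ => max u 0 - max (-u) 0) = fun u : ℝ => u := by
        funext u
        rcases le_total u 0 with h | h
        · rw [max_eq_right h, max_eq_left (by linarith)]; ring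
        · rw [max_eq_left h, max_eq_right (by linarith)]; ring
      rw [hfun, gad_id]
    have hPVP : P * V * P = Wp := by
      rw [hVdec, Matrix.mul_sub, hPWp, hPWm, Matrix.sub_mul, Matrix.zero_mul, sub_zero, hWpP]
    set C := Q * Φ Wp * Q with hC_def
    set D := Q * Φ Wm * Q with hD_def
    have hCpsd : C.PosSemidef := psd_conj_herm (hΦpos _ hWp) hQherm
    have hDpsd : D.PosSemidef := psd_conj_herm (hΦpos _ hWm) hQherm
    have hCD : C - D = V := by
      rw [hC_def, hD_def]
      have h3 : Φ Wp - Φ Wm = Φ V := by rw [← map_sub, ← hVdec]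
      calc Q * Φ Wp * Q - Q * Φ Wm * Q = Q * (Φ Wp - Φ Wm) * Q := by
            rw [Matrix.mul_sub, Matrix.sub_mul]
        _ = V := by rw [h3, hVfix]
    have hPCP := psd_conj_herm hCpsd hPh
    have hPDP := psd_conj_herm hDpsd hPh
    have hWpPCP : Wp = P * C * P - P * D * P := by
      rw [← hPVP, ← hCD, Matrix.mul_sub, Matrix.sub_mul]
    have e1 : Wp.trace = (P * C * P).trace - (P * D * P).trace := by
      rw [hWpPCP, Matrix.trace_sub]
    have e2 : (P * C * P).trace ≤ C.trace := by
      have h := psd_trace_nonneg (psd_conj_herm hCpsd (herm_one_sub hPh))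
      rw [trace_corner_diff C P hPidem] at h
      exact sub_nonneg.mp h
    have e3 : C.trace ≤ Wp.trace := by
      have h := psd_trace_nonneg (psd_conj_herm (hΦpos _ hWp) (herm_one_sub hQherm))
      rw [trace_corner_diff _ Q hQidem] at h
      have h' := sub_nonneg.mp h
      rw [hΦtr] at h'
      exact h'
    have e5 : 0 ≤ (P * D * P).trace := psd_trace_nonneg hPDP
    have e6 : Wp.trace ≤ (P * C * P).trace := by
      have : Wp.trace + (P * D * P).trace = (P * C * P).trace := by rw [e1]; ring
      rw [← this]
      exact le_add_of_nonneg_right e5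
    have e7 : (P * C * P).trace = Wp.trace := le_antisymm (e2.trans e3) e6
    have e8 : (P * D * P).trace = 0 := by
      linear_combination e7 + e1
    have e9 : C.trace = (P * C * P).trace := le_antisymm (by rw [e7]; exact e3) e2
    have hD0 : P * D * P = 0 := psd_trace_zero hPDP e8
    have hCeq : C = P * C * P := psd_corner_of_trace hCpsd hPh hPidem e9
    have hfinal : Wp = C := by rw [hWpPCP, hD0, sub_zero, ← hCeq]
    exact hfinal.symm
  -- Hermitian fixed points vanish
  have hermfix : ∀ W : Matrix (Fin n) (Fin n) ℂ, ∀ hW : W.IsHermitian,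
      Q * Φ W * Q = W → W = 0 := by
    intro W hW hfix
    by_contra hW0
    have hWdec : W = gad hW (fun u => max u 0) - gad hW (fun u => max (-u) 0) := by
      rw [← gad_sub]
      have hfun : (fun u : ℝ => max u 0 - max (-u) 0) = fun u : ℝ => u := by
        funext u
        rcases le_total u 0 with h | h
        · rw [max_eq_right h, max_eq_left (by linarith)]; ring
        · rw [max_eq_left h, max_eq_right (by linarith)]; ring
      rw [hfun, gad_id]
    by_cases hWp0 : gad hW (fun u => max u 0) = 0
    · -- then -W is PSD, nonzero, fixed
      have hWm : (gad hW (fun u => max (-u) 0)).PosSemidef :=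
        gad_posSemidef hW _ fun i => le_max_right _ _
      rw [hWp0, zero_sub] at hWdec
      have hWneg : gad hW (fun u => max (-u) 0) = -W := by
        have := congrArg Neg.neg hWdec
        rw [neg_neg] at this
        exact this.symm
      have hmne : gad hW (fun u => max (-u) 0) ≠ 0 := by
        rw [hWneg]
        simpa using hW0
      have hmfix : Q * Φ (gad hW (fun u => max (-u) 0)) * Q = gad hW (fun u => max (-u) 0) := by
        rw [hWneg, map_neg, Matrix.mul_neg, Matrix.neg_mul, hfix]
      exact psdfix _ hWm hmne hmfix
    · exact psdfix _ (gad_posSemidef hW _ fun i => le_max_right _ _) hWp0 (posfix W hW hfix)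
  -- main claim
  have key : ∀ X : Matrix (Fin n) (Fin n) ℂ, QQ (Φ X) = X → X = 0 := by
    intro X hX
    rw [hQQ] at hX
    have hXc : Q * Φ Xᴴ * Q = Xᴴ := by
      rw [hΦstar]
      have h := congrArg Matrix.conjTranspose hX
      rwa [Matrix.conjTranspose_mul, Matrix.conjTranspose_mul, hQherm,
        ← Matrix.mul_assoc] at h
    obtain ⟨hH, hK, hXsum, -⟩ := herm_parts X
    set H := (2⁻¹ : ℂ) • (X + Xᴴ) with hH_def
    set K := (-(Complex.I)/2) • (X - Xᴴ) with hK_def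
    have hHfix : Q * Φ H * Q = H := by
      rw [hH_def, _root_.map_smul, Matrix.mul_smul, Matrix.smul_mul, map_add,
        Matrix.mul_add, Matrix.add_mul, hX, hXc]
    have hKfix : Q * Φ K * Q = K := by
      rw [hK_def, _root_.map_smul, Matrix.mul_smul, Matrix.smul_mul, map_sub,
        Matrix.mul_sub, Matrix.sub_mul, hX, hXc]
    have hH0 := hermfix H hH hHfix
    have hK0 := hermfix K hK hKfix
    rw [hXsum, hH0, hK0]
    simp
  refine ⟨key, ?_⟩
  have hinj : Function.Injective
      ⇑(LinearMap.id - QQ ∘ₗ Φ : Matrix (Fin n) (Fin n) ℂ →ₗ[ℂ] Matrix (Fin n) (Fin n) ℂ) := by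
    rw [injective_iff_map_eq_zero]
    intro x hx
    simp only [LinearMap.sub_apply, LinearMap.id_apply, LinearMap.comp_apply] at hx
    rw [sub_eq_zero] at hx
    exact key x hx.symm
  exact ⟨hinj, LinearMap.injective_iff_surjective.mp hinj⟩
end

section
/- (MHTF for positive maps and orthogonal states.) Let Φ be an irreducible, positive, trace preserving linear map on M_n(ℂ) with invariant state π, Ω(X) = Tr(X)·π, Z = (I − Φ + Ω)⁻¹. Let V ⊆ ℂⁿ be a subspace with V ≠ 0 and V ≠ ℂⁿ, P the orthogonal projection onto V, Q = I_n − P, ℙ(X) = PXP, ℚ(X) = QXQ, and K = Φ∘(I − ℚ∘Φ)⁻². Then for every unit vector ψ ∈ V and every unit vector φ ∈ V⊥, with ρ_ψ = ψψ* and ρ_φ = φφ*: τ(φ→V) = Tr(K₁₁(Z₁₁(ρ_ψ) − Z₁₂(ρ_φ))), where τ(φ→V) = Σ_{r≥1} r·Tr(ℙ(Φ((ℚ∘Φ)^{r−1}(ρ_φ)))), K₁₁ = (I−ℚ)∘K∘(I−ℚ), Z₁₁ = (I−ℚ)∘Z∘(I−ℚ), and Z₁₂ = (I−ℚ)∘Z∘ℚ.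 -/
open Matrix ComplexOrder

open Filter Topology

variable {n : ℕ}

private lemma mhtf_psd_vecMulVec (φ : Fin n → ℂ) :
    (Matrix.vecMulVec φ (star φ)).PosSemidef := by
  refine Matrix.PosSemidef.of_dotProduct_mulVec_nonneg ?_ ?_
  · ext i j
    simp [conjTranspose_apply, vecMulVec_apply, mul_comm]
  · intro x
    have : star x ⬝ᵥ (Matrix.vecMulVec φ (star φ)) *ᵥ x
        = star (star φ ⬝ᵥ x) * (star φ ⬝ᵥ x) := by
      simp only [dotProduct, mulVec, vecMulVec_apply, Pi.star_apply, Finset.mul_sum,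
        Finset.sum_mul, star_sum, star_mul', star_star]
      rw [Finset.sum_comm]
      congr 1; ext i; congr 1; ext j; ring
    rw [this]
    exact star_mul_self_nonneg _

private lemma mhtf_trace_nonneg {M : Matrix (Fin n) (Fin n) ℂ} (h : M.PosSemidef) :
    0 ≤ M.trace := by
  rw [Matrix.trace]
  refine Finset.sum_nonneg fun i _ => ?_
  simpa [dotProduct, Pi.single_apply] using h.dotProduct_mulVec_nonneg (Pi.single i 1)

private lemma mhtf_trace_eq_re {M : Matrix (Fin n) (Fin n) ℂ} (h : M.PosSemidef) :
    M.trace = (M.trace.re : ℂ) := by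
  have := mhtf_trace_nonneg h
  rw [Complex.le_def] at this
  exact Complex.ext (by simp) (by simp [← this.2])


private lemma mhtf_diag_re {M : Matrix (Fin n) (Fin n) ℂ} (h : M.PosSemidef) (k : Fin n) :
    0 ≤ (M k k).re ∧ (M k k).im = 0 := by
  have h0 : (0:ℂ) ≤ M k k := by
    simpa [dotProduct, Pi.single_apply] using h.dotProduct_mulVec_nonneg (Pi.single k 1)
  rw [Complex.le_def] at h0
  exact ⟨by simpa using h0.1, by simpa using h0.2.symm⟩

private lemma mhtf_entry_bound {M : Matrix (Fin n) (Fin n) ℂ} (h : M.PosSemidef) (i j : Fin n) :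
    ‖M i j‖ ≤ M.trace.re := by
  have hre : M.trace.re = ∑ k, (M k k).re := by
    simp [Matrix.trace, Matrix.diag, Complex.re_sum]
  by_cases hij : i = j
  · subst hij
    have := mhtf_diag_re h i
    have habs : ‖M i i‖ = (M i i).re := by
      rw [Complex.norm_def, Complex.normSq_apply, this.2]
      simpa using Real.sqrt_mul_self this.1
    rw [habs, hre]
    exact Finset.single_le_sum (f := fun k => (M k k).re)
      (fun k _ => (mhtf_diag_re h k).1) (Finset.mem_univ i)
  · by_cases h0 : M i j = 0
    · rw [h0]
      simp only [norm_zero, hre]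
      exact Finset.sum_nonneg fun k _ => (mhtf_diag_re h k).1
    · set c : ℂ := -(star (M i j)) / ‖M i j‖ with hc
      have habsc : star c * c = 1 := by
        have : ‖M i j‖ ≠ 0 := by simpa using h0
        have hz : (‖M i j‖ : ℂ) ≠ 0 := by exact_mod_cast this
        rw [hc, star_div₀, star_neg, star_star, Complex.star_def, Complex.conj_ofReal,
          div_mul_div_comm, neg_mul_neg, Complex.mul_conj, Complex.normSq_eq_norm_sq]
        push_cast
        field_simp
      have hcM : c * M i j = -(‖M i j‖ : ℂ) := by
        have : ‖M i j‖ ≠ 0 := by simpa using h0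
        have hz : (‖M i j‖ : ℂ) ≠ 0 := by exact_mod_cast this
        rw [hc, div_mul_eq_mul_div, neg_mul, Complex.star_def, mul_comm, Complex.mul_conj,
          Complex.normSq_eq_norm_sq]
        push_cast
        field_simp
      have hsym : M j i = star (M i j) := by
        have := congrFun (congrFun h.1.eq j) i
        simpa [conjTranspose_apply] using this.symm
      have hscM : star c * M j i = -(‖M i j‖ : ℂ) := by
        have : star c * M j i = star (c * M i j) := by
          rw [hsym, star_mul']
        rw [this, hcM]
        simp
      have hq := h.dotProduct_mulVec_nonneg (Pi.single i 1 + Pi.single j c)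
      have hexp : star (Pi.single i (1:ℂ) + Pi.single j c) ⬝ᵥ
            M *ᵥ (Pi.single i 1 + Pi.single j c)
          = M i i + c * M i j + star c * M j i + star c * c * M j j := by
        simp only [star_add, ← Pi.single_star, star_one, mulVec_add, mulVec_single,
          dotProduct_add, add_dotProduct, single_dotProduct, mul_one, Pi.smul_apply, col_apply,
          op_smul_eq_mul]
        ring
      rw [hexp, hcM, hscM, habsc, one_mul, Complex.le_def] at hq
      have hq1 := hq.1
      simp only [Complex.add_re, Complex.neg_re, Complex.ofReal_re, Complex.zero_re] at hq1
      -- M i i .re - |Mij| - |Mij| + M j j .re ≥ 0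
      have hsum2 : (M i i).re + (M j j).re ≤ ∑ k, (M k k).re := by
        have := Finset.sum_le_sum_of_subset_of_nonneg
          (Finset.subset_univ {i, j}) (fun k _ _ => (mhtf_diag_re h k).1)
        simpa [Finset.sum_pair hij] using this
      rw [hre]
      nlinarith [norm_nonneg (M i j)]

private lemma mhtf_mul_tendsto_zero {β : ℕ → ℝ} (hnn : ∀ m, 0 ≤ β m)
    (hanti : ∀ m, β (m + 1) ≤ β m) (hsum : Summable β) :
    Tendsto (fun m : ℕ => (m : ℝ) * β m) atTop (𝓝 0) := by
  have hanti' : Antitone β := antitone_nat_of_succ_le hanti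
  set B := ∑' m, β m with hB
  have hps : Tendsto (fun m => ∑ r ∈ Finset.range m, β r) atTop (𝓝 B) :=
    hsum.hasSum.tendsto_sum_nat
  have hle : ∀ m, ∑ r ∈ Finset.range m, β r ≤ B := fun m =>
    Summable.sum_le_tsum _ (fun r _ => hnn r) hsum
  rw [Metric.tendsto_atTop]
  intro ε hε
  obtain ⟨k, hk⟩ := (Metric.tendsto_atTop.1 hps) (ε / 4) (by linarith)
  refine ⟨2 * k + 1, fun m hm => ?_⟩
  have hkm : k ≤ m := by omega
  have h1 : (m - k : ℕ) * β m ≤ ∑ r ∈ Finset.Ico k m, β r := by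
    have : ∀ r ∈ Finset.Ico k m, β m ≤ β r := fun r hr =>
      hanti' (Finset.mem_Ico.1 hr).2.le
    calc (m - k : ℕ) * β m = (Finset.Ico k m).card • β m := by
          rw [Nat.card_Ico]; simp [nsmul_eq_mul]
      _ ≤ ∑ r ∈ Finset.Ico k m, β r := Finset.card_nsmul_le_sum _ _ _ this
  have h2 : ∑ r ∈ Finset.Ico k m, β r = ∑ r ∈ Finset.range m, β r
      - ∑ r ∈ Finset.range k, β r := by
    rw [Finset.sum_Ico_eq_sub _ hkm]
  have h3 : ∑ r ∈ Finset.range m, β r - ∑ r ∈ Finset.range k, β r ≤ ε / 4 := by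
    have := hk k le_rfl
    rw [Real.dist_eq, abs_lt] at this
    have h4 := hle m
    linarith
  have h5 : (m : ℝ) ≤ 2 * ((m : ℝ) - k) := by
    have h2k : (2 * k + 1 : ℕ) ≤ m := hm
    have : ((2 * k + 1 : ℕ) : ℝ) ≤ (m : ℕ) := Nat.cast_le.2 h2k
    push_cast at this
    linarith
  have hcast : ((m - k : ℕ) : ℝ) = (m : ℝ) - k := by
    push_cast [Nat.cast_sub hkm]
    ring
  have hβm := hnn m
  rw [Real.dist_eq, sub_zero, abs_of_nonneg (by positivity)]
  have h6 : (m : ℝ) * β m ≤ 2 * (((m - k : ℕ) : ℝ) * β m) := by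
    rw [hcast]
    nlinarith
  linarith

private lemma mhtf_hasSum {β : ℕ → ℝ} {B : ℝ} (hnn : ∀ m, 0 ≤ β m)
    (hanti : ∀ m, β (m + 1) ≤ β m)
    (htend : Tendsto (fun m => ∑ r ∈ Finset.range m, β r) atTop (𝓝 B)) :
    HasSum (fun r : ℕ => ((r : ℝ) + 1) * (β r - β (r + 1))) B := by
  have hmono : Monotone (fun m => ∑ r ∈ Finset.range m, β r) :=
    monotone_nat_of_le_succ fun m => by
      rw [Finset.sum_range_succ]; linarith [hnn m]
  have hle : ∀ m, ∑ r ∈ Finset.range m, β r ≤ B := fun m =>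
    hmono.ge_of_tendsto htend m
  have hsum : Summable β := summable_of_sum_range_le hnn hle
  have hmul := mhtf_mul_tendsto_zero hnn hanti hsum
  have hps : ∀ m, ∑ r ∈ Finset.range m, ((r : ℝ) + 1) * (β r - β (r + 1))
      = ∑ r ∈ Finset.range m, β r - (m : ℝ) * β m := by
    intro m
    induction m with
    | zero => simp
    | succ m ih =>
      rw [Finset.sum_range_succ, ih, Finset.sum_range_succ]
      push_cast
      ring
  rw [hasSum_iff_tendsto_nat_of_nonneg
    (fun r => mul_nonneg (by positivity) (by linarith [hanti r]))]
  have : Tendsto (fun m => ∑ r ∈ Finset.range m, β r - (m : ℝ) * β m) atTop (𝓝 (B - 0)) :=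
    htend.sub hmul
  rw [sub_zero] at this
  exact this.congr fun m => (hps m).symm

/-- MHTF for positive maps and orthogonal states: for an irreducible,
positive, trace preserving `Φ` with fundamental map `Z`, a nontrivial subspace `V` with
orthogonal projection `P`, `Q = I − P`, `ℙ(X) = PXP`, `ℚ(X) = QXQ`, `R = (I − ℚ∘Φ)⁻¹`,
`K = Φ∘R∘R`: for unit vectors `ψ ∈ V`, `φ ∈ V⊥`,
`τ(φ→V) = Σ_{r≥1} r·Tr(ℙ(Φ((ℚ∘Φ)^{r−1}(ρ_φ)))) = Tr(K₁₁(Z₁₁(ρ_ψ) − Z₁₂(ρ_φ)))`. -/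
theorem mhtf_orthogonal {n : ℕ}
    (Φ Ω Z PP QQ R K : Matrix (Fin n) (Fin n) ℂ →ₗ[ℂ] Matrix (Fin n) (Fin n) ℂ)
    (π P Q : Matrix (Fin n) (Fin n) ℂ)
    (hΦpos : ∀ X : Matrix (Fin n) (Fin n) ℂ, X.PosSemidef → (Φ X).PosSemidef)
    (hΦtr : ∀ X : Matrix (Fin n) (Fin n) ℂ, (Φ X).trace = X.trace)
    (hΦirr : ∀ p : Matrix (Fin n) (Fin n) ℂ, p.IsHermitian → p * p = p →
      (∀ X : Matrix (Fin n) (Fin n) ℂ, Φ (p * X * p) = p * Φ (p * X * p) * p) → p = 0 ∨ p = 1)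
    (hπpos : π.PosSemidef) (hπtr : π.trace = 1) (hπinv : Φ π = π)
    (hΩ : ∀ X : Matrix (Fin n) (Fin n) ℂ, Ω X = X.trace • π)
    (hZ1 : Z ∘ₗ (LinearMap.id - Φ + Ω) = LinearMap.id)
    (hZ2 : (LinearMap.id - Φ + Ω) ∘ₗ Z = LinearMap.id)
    (hPherm : P.IsHermitian) (hPidem : P * P = P) (hPne0 : P ≠ 0) (hPne1 : P ≠ 1)
    (hQ : Q = 1 - P)
    (hPP : ∀ X : Matrix (Fin n) (Fin n) ℂ, PP X = P * X * P)
    (hQQ : ∀ X : Matrix (Fin n) (Fin n) ℂ, QQ X = Q * X * Q)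
    (hR1 : R ∘ₗ (LinearMap.id - QQ ∘ₗ Φ) = LinearMap.id)
    (hR2 : (LinearMap.id - QQ ∘ₗ Φ) ∘ₗ R = LinearMap.id)
    (hK : K = Φ ∘ₗ R ∘ₗ R)
    (ψ φ : Fin n → ℂ) (hψ : star ψ ⬝ᵥ ψ = 1) (hφ : star φ ⬝ᵥ φ = 1)
    (hψV : P *ᵥ ψ = ψ) (hφV : Q *ᵥ φ = φ) :
    HasSum (fun r : ℕ => ((r : ℂ) + 1) *
        (PP (Φ (((QQ ∘ₗ Φ) ^ r) (Matrix.vecMulVec φ (star φ))))).trace)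
      ((((1 - QQ) ∘ₗ K ∘ₗ (1 - QQ))
        (((1 - QQ) ∘ₗ Z ∘ₗ (1 - QQ)) (Matrix.vecMulVec ψ (star ψ))
          - ((1 - QQ) ∘ₗ Z ∘ₗ QQ) (Matrix.vecMulVec φ (star φ)))).trace) := by
  classical
  set ρψ := Matrix.vecMulVec ψ (star ψ) with hρψ
  set ρφ := Matrix.vecMulVec φ (star φ) with hρφ
  set N : Matrix (Fin n) (Fin n) ℂ →ₗ[ℂ] Matrix (Fin n) (Fin n) ℂ := QQ ∘ₗ Φ with hN
  -- basic matrix facts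
  have hQherm : Qᴴ = Q := by
    rw [hQ, conjTranspose_sub, conjTranspose_one, hPherm.eq]
  have hQidem : Q * Q = Q := by
    rw [hQ]
    simp only [sub_mul, mul_sub, one_mul, mul_one, hPidem]
    abel
  have hQψ0 : Q *ᵥ ψ = 0 := by
    rw [hQ, sub_mulVec, one_mulVec, hψV, sub_self]
  have hQmulρψ : Q * ρψ = 0 := by
    ext i j
    have h0 : (Q *ᵥ ψ) i = 0 := by rw [hQψ0]; rfl
    simp only [hρψ, mul_apply, vecMulVec_apply, Matrix.zero_apply]
    calc ∑ k, Q i k * (ψ k * star ψ j) = (∑ k, Q i k * ψ k) * star ψ j := by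
          rw [Finset.sum_mul]; exact Finset.sum_congr rfl fun k _ => by ring
      _ = 0 := by
          rw [show ∑ k, Q i k * ψ k = (Q *ᵥ ψ) i from rfl, hQψ0]
          simp
  have hQQρψ : QQ ρψ = 0 := by rw [hQQ, hQmulρψ, Matrix.zero_mul]
  have hQmulρφ : Q * ρφ = ρφ := by
    ext i j
    simp only [hρφ, mul_apply, vecMulVec_apply]
    calc ∑ k, Q i k * (φ k * star φ j) = (∑ k, Q i k * φ k) * star φ j := by
          rw [Finset.sum_mul]; exact Finset.sum_congr rfl fun k _ => by ring
      _ = φ i * star φ j := by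
          rw [show ∑ k, Q i k * φ k = (Q *ᵥ φ) i from rfl, hφV]
  have hρφmulQ : ρφ * Q = ρφ := by
    ext i j
    simp only [hρφ, mul_apply, vecMulVec_apply]
    have hrow : ∑ k, star φ k * Q k j = star φ j := by
      have := congrArg (fun z => star z) (congrFun hφV j)
      simp only [mulVec, dotProduct, star_sum, star_mul'] at this
      calc ∑ k, star φ k * Q k j = ∑ k, star (Q j k) * star (φ k) := by
            refine Finset.sum_congr rfl fun k _ => ?_
            have : star (Q j k) = Q k j := by
              conv_lhs => rw [← hQherm]
              simp [conjTranspose_apply]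
            rw [this, Pi.star_apply]; ring
        _ = star φ j := this
    calc ∑ k, φ i * star φ k * Q k j = φ i * ∑ k, star φ k * Q k j := by
          rw [Finset.mul_sum]; exact Finset.sum_congr rfl fun k _ => by ring
      _ = φ i * star φ j := by rw [hrow]
  have hQQρφ : QQ ρφ = ρφ := by rw [hQQ, hQmulρφ, hρφmulQ]
  have htrρψ : ρψ.trace = 1 := by
    rw [hρψ, ← hψ]
    simp only [Matrix.trace, Matrix.diag, vecMulVec_apply, dotProduct, Pi.star_apply]
    exact Finset.sum_congr rfl fun i _ => mul_comm _ _
  have htrρφ : ρφ.trace = 1 := by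
    rw [hρφ, ← hφ]
    simp only [Matrix.trace, Matrix.diag, vecMulVec_apply, dotProduct, Pi.star_apply]
    exact Finset.sum_congr rfl fun i _ => mul_comm _ _
  -- pointwise versions of inverses
  have hR1' : ∀ X, R (X - N X) = X := fun X => by
    have := LinearMap.congr_fun hR1 X
    simpa [LinearMap.sub_apply, LinearMap.comp_apply] using this
  have hR2' : ∀ X, R X - N (R X) = X := fun X => by
    have := LinearMap.congr_fun hR2 X
    simpa [LinearMap.sub_apply, LinearMap.comp_apply] using this
  -- trace helpers
  have htrQQ : ∀ M : Matrix (Fin n) (Fin n) ℂ, (QQ M).trace = (Q * M).trace := by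
    intro M
    rw [hQQ, Matrix.trace_mul_cycle, hQidem]
  have hPPtr : ∀ M : Matrix (Fin n) (Fin n) ℂ,
      (PP (Φ M)).trace = M.trace - (QQ (Φ M)).trace := by
    intro M
    rw [hPP, Matrix.trace_mul_cycle, hPidem, htrQQ]
    have hP : P = 1 - Q := by rw [hQ]; abel
    rw [hP, Matrix.sub_mul, Matrix.one_mul, Matrix.trace_sub, hΦtr]
  -- positivity along the orbit
  have hpow : ∀ (m : ℕ) (X : Matrix (Fin n) (Fin n) ℂ), (N ^ (m + 1)) X = N ((N ^ m) X) := by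
    intro m X
    rw [pow_succ']
    rfl
  have hpsd : ∀ m : ℕ, ((N ^ m) ρφ).PosSemidef := by
    intro m
    induction m with
    | zero =>
      simpa [pow_zero, Module.End.one_apply] using mhtf_psd_vecMulVec (n := n) φ
    | succ m ih =>
      rw [hpow m]
      have : N ((N ^ m) ρφ) = Qᴴ * Φ ((N ^ m) ρφ) * Q := by
        rw [hQherm, hN]
        simp only [LinearMap.comp_apply]
        rw [hQQ]
      rw [this]
      exact (hΦpos _ ih).conjTranspose_mul_mul_same Q
  have hPpsd : ∀ m : ℕ, (PP (Φ ((N ^ m) ρφ))).PosSemidef := by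
    intro m
    have : PP (Φ ((N ^ m) ρφ)) = Pᴴ * Φ ((N ^ m) ρφ) * P := by
      rw [hPherm.eq, hPP]
    rw [this]
    exact (hΦpos _ (hpsd m)).conjTranspose_mul_mul_same P
  -- the scalar sequences
  set b : ℕ → ℂ := fun m => ((N ^ m) ρφ).trace with hb
  set β : ℕ → ℝ := fun m => (b m).re with hβ
  have hbre : ∀ m, b m = (β m : ℂ) := fun m => mhtf_trace_eq_re (hpsd m)
  have hβnn : ∀ m, 0 ≤ β m := by
    intro m
    have := mhtf_trace_nonneg (hpsd m)
    rw [Complex.le_def] at this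
    simpa using this.1
  have hterm : ∀ r : ℕ, (PP (Φ ((N ^ r) ρφ))).trace = b r - b (r + 1) := by
    intro r
    rw [hPPtr, hb]
    simp only []
    rw [hpow r]
    rfl
  have hβanti : ∀ m, β (m + 1) ≤ β m := by
    intro m
    have h1 := mhtf_trace_nonneg (hPpsd m)
    rw [hterm m, Complex.le_def] at h1
    have := h1.1
    simp only [Complex.sub_re, Complex.zero_re] at this
    simp only [hβ]
    linarith
  -- partial sums of b
  have hps : ∀ m : ℕ, ∑ r ∈ Finset.range m, b r
      = (R ρφ).trace - (R ((N ^ m) ρφ)).trace := by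
    intro m
    induction m with
    | zero => simp [pow_zero, Module.End.one_apply]
    | succ m ih =>
      rw [Finset.sum_range_succ, ih]
      have key : b m = (R ((N ^ m) ρφ)).trace - (R ((N ^ (m + 1)) ρφ)).trace := by
        have h1 : R ((N ^ m) ρφ - N ((N ^ m) ρφ)) = (N ^ m) ρφ := hR1' _
        rw [map_sub] at h1
        have h2 := congrArg Matrix.trace h1
        rw [Matrix.trace_sub] at h2
        rw [hpow m]
        exact h2.symm
      rw [key]
      ring
  -- the bound on traces through R
  set C : ℝ := ∑ i, ∑ j, ‖(R (Matrix.single i j (1:ℂ))).trace‖ with hC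
  have hC0 : 0 ≤ C := Finset.sum_nonneg fun i _ =>
    Finset.sum_nonneg fun j _ => norm_nonneg _
  have hRbound : ∀ M : Matrix (Fin n) (Fin n) ℂ, M.PosSemidef →
      ‖(R M).trace‖ ≤ C * M.trace.re := by
    intro M hM
    have hMeq : M = ∑ i, ∑ j, M i j • Matrix.single i j (1:ℂ) := by
      conv_lhs => rw [matrix_eq_sum_single M]
      refine Finset.sum_congr rfl fun i _ => Finset.sum_congr rfl fun j _ => ?_
      rw [smul_single, smul_eq_mul, mul_one]
    have htr : (R M).trace = ∑ i, ∑ j, M i j * (R (Matrix.single i j (1:ℂ))).trace := by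
      conv_lhs => rw [hMeq]
      rw [map_sum, Matrix.trace_sum]
      refine Finset.sum_congr rfl fun i _ => ?_
      rw [map_sum, Matrix.trace_sum]
      refine Finset.sum_congr rfl fun j _ => ?_
      rw [_root_.map_smul, Matrix.trace_smul, smul_eq_mul]
    rw [htr]
    calc ‖∑ i, ∑ j, M i j * (R (Matrix.single i j (1:ℂ))).trace‖
        ≤ ∑ i, ∑ j, ‖M i j * (R (Matrix.single i j (1:ℂ))).trace‖ := by
          refine (norm_sum_le _ _).trans ?_
          exact Finset.sum_le_sum fun i _ => norm_sum_le _ _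
      _ ≤ ∑ i, ∑ j, M.trace.re * ‖(R (Matrix.single i j (1:ℂ))).trace‖ := by
          refine Finset.sum_le_sum fun i _ => Finset.sum_le_sum fun j _ => ?_
          rw [norm_mul]
          exact mul_le_mul_of_nonneg_right (mhtf_entry_bound hM i j) (norm_nonneg _)
      _ = C * M.trace.re := by
          rw [hC, Finset.sum_mul]
          refine Finset.sum_congr rfl fun i _ => ?_
          rw [Finset.sum_mul]
          exact Finset.sum_congr rfl fun j _ => mul_comm _ _
  -- summability of β
  have hβle0 : ∀ m, β m ≤ β 0 := by
    intro m
    induction m with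
    | zero => exact le_rfl
    | succ m ih => exact (hβanti m).trans ih
  have hβsum : Summable β := by
    refine summable_of_sum_range_le hβnn (c := (R ρφ).trace.re + C * β 0) ?_
    intro m
    have h1 : ∑ r ∈ Finset.range m, β r = ((∑ r ∈ Finset.range m, b r)).re := by
      rw [Complex.re_sum]
    rw [h1, hps m, Complex.sub_re]
    have h2 : ‖(R ((N ^ m) ρφ)).trace‖ ≤ C * β m := hRbound _ (hpsd m)
    have h3 : -(C * β m) ≤ ((R ((N ^ m) ρφ)).trace).re := by
      have := Complex.abs_re_le_norm ((R ((N ^ m) ρφ)).trace)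
      have h4 := abs_le.1 (this.trans h2)
      exact h4.1
    have h5 : C * β m ≤ C * β 0 := mul_le_mul_of_nonneg_left (hβle0 m) hC0
    linarith
  -- limits
  have hβ0 : Tendsto β atTop (𝓝 0) := hβsum.tendsto_atTop_zero
  have htr0 : Tendsto (fun m : ℕ => (R ((N ^ m) ρφ)).trace) atTop (𝓝 (0:ℂ)) := by
    refine squeeze_zero_norm (a := fun m => C * β m) (fun m => ?_) ?_
    · simpa using hRbound _ (hpsd m)
    · have : Tendsto (fun m : ℕ => C * β m) atTop (𝓝 (C * 0)) := hβ0.const_mul C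
      simpa using this
  have hbs : Tendsto (fun m : ℕ => ∑ r ∈ Finset.range m, b r) atTop (𝓝 ((R ρφ).trace)) := by
    have : Tendsto (fun m : ℕ => (R ρφ).trace - (R ((N ^ m) ρφ)).trace) atTop
        (𝓝 ((R ρφ).trace - 0)) := tendsto_const_nhds.sub htr0
    rw [sub_zero] at this
    exact this.congr fun m => (hps m).symm
  have hβs : Tendsto (fun m : ℕ => ∑ r ∈ Finset.range m, β r) atTop
      (𝓝 ((R ρφ).trace.re)) := by
    have := (Complex.continuous_re.tendsto _).comp hbs
    refine this.congr fun m => ?_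
    simp only [Function.comp_apply, Complex.re_sum, hβ]
  -- the real HasSum and transfer to ℂ
  have hreal : HasSum (fun r : ℕ => ((r : ℝ) + 1) * (β r - β (r + 1))) ((R ρφ).trace.re) :=
    mhtf_hasSum hβnn hβanti hβs
  have hcplx' : HasSum (fun r : ℕ => ((((r : ℝ) + 1) * (β r - β (r + 1)) : ℝ) : ℂ))
      (((R ρφ).trace.re : ℂ)) := Complex.hasSum_ofReal.mpr hreal
  -- identify trace of R ρφ with its real part
  have hRρφreal : (R ρφ).trace = ((R ρφ).trace.re : ℂ) := by
    have h1 : Tendsto (fun m : ℕ => ∑ r ∈ Finset.range m, b r) atTop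
        (𝓝 (((R ρφ).trace.re : ℂ))) := by
      have h2 := (Complex.continuous_ofReal.tendsto _).comp hβs
      refine h2.congr fun m => ?_
      simp only [Function.comp_apply, Complex.ofReal_sum]
      exact Finset.sum_congr rfl fun r _ => (hbre r).symm
    exact tendsto_nhds_unique hbs h1
  -- algebraic identification of the target
  have halg : ((((1 - QQ) ∘ₗ K ∘ₗ (1 - QQ))
        (((1 - QQ) ∘ₗ Z ∘ₗ (1 - QQ)) ρψ - ((1 - QQ) ∘ₗ Z ∘ₗ QQ) ρφ)).trace)
      = (R ρφ).trace := by
    set D : Matrix (Fin n) (Fin n) ℂ := ρψ - ρφ with hD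
    set Y : Matrix (Fin n) (Fin n) ℂ := Z D with hY
    have hZ2' : Y - Φ Y + Ω Y = D := by
      have := LinearMap.congr_fun hZ2 D
      simpa [LinearMap.add_apply, LinearMap.sub_apply, LinearMap.comp_apply] using this
    have htrD : D.trace = 0 := by rw [hD, Matrix.trace_sub, htrρψ, htrρφ, sub_self]
    have htrY : Y.trace = 0 := by
      have := congrArg Matrix.trace hZ2'
      rw [Matrix.trace_add, Matrix.trace_sub, hΦtr, hΩ, Matrix.trace_smul, hπtr,
        smul_eq_mul, mul_one, htrD] at this
      simpa using this
    have hΩY : Ω Y = 0 := by rw [hΩ, htrY, zero_smul]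
    have hΦY : Φ Y = Y - D := by
      have h1 := hZ2'
      rw [hΩY, add_zero] at h1
      rw [← h1]
      abel
    have hNY : N Y = QQ Y + ρφ := by
      have h1 : N Y = QQ (Φ Y) := rfl
      rw [h1, hΦY, map_sub, hD, map_sub, hQQρψ, hQQρφ]
      abel
    have hQQidem : ∀ X : Matrix (Fin n) (Fin n) ℂ, QQ (QQ X) = QQ X := by
      intro X
      simp only [hQQ]
      rw [show Q * (Q * X * Q) * Q = (Q * Q) * X * (Q * Q) by
        simp only [Matrix.mul_assoc], hQidem]
    have hinner : ((1 - QQ) ∘ₗ Z ∘ₗ (1 - QQ)) ρψ - ((1 - QQ) ∘ₗ Z ∘ₗ QQ) ρφ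
        = Y - QQ Y := by
      simp only [LinearMap.comp_apply, LinearMap.sub_apply, Module.End.one_apply]
      rw [hQQρψ, hQQρφ, sub_zero, hY, hD, map_sub, map_sub]
      abel
    rw [hinner]
    have hQQW : QQ (Y - QQ Y) = 0 := by
      rw [map_sub, hQQidem, sub_self]
    simp only [LinearMap.comp_apply, LinearMap.sub_apply, Module.End.one_apply]
    rw [hQQW, sub_zero]
    have hKW : ∀ X : Matrix (Fin n) (Fin n) ℂ, K X = Φ (R (R X)) := fun X => by
      rw [hK]; rfl
    rw [Matrix.trace_sub, hKW]
    have h2 : (QQ (Φ (R (R (Y - QQ Y))))).trace = (N (R (R (Y - QQ Y)))).trace := rfl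
    rw [hΦtr, h2, ← Matrix.trace_sub, hR2']
    have hW : Y - QQ Y = (Y - N Y) + ρφ := by rw [hNY]; abel
    rw [hW, map_add, Matrix.trace_add, hR1', htrY, zero_add]
  rw [halg, hRρφreal]
  have hfun : (fun r : ℕ => ((r : ℂ) + 1) * (PP (Φ ((N ^ r) ρφ))).trace)
      = fun r : ℕ => ((((r : ℝ) + 1) * (β r - β (r + 1)) : ℝ) : ℂ) := by
    funext r
    rw [hterm r, hbre r, hbre (r + 1)]
    push_cast
    ring

  rw [hfun]
  exact hcplx'
end
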